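/- For all integers n ≥ 2 and k ≥ 2, let A be the adjacency matrix of W_{n,k} over ℝ. Then the characteristic polynomial of A² equals (X − 1)^{2(k−1)n} · ∏_{j=0}^{n−1} ( X − (k² + 1 + 2k·cos(2πj/n)) )². Equivalently, the eigenvalues of A² are k² + 1 + 2k·cos(2πj/n) for j = 0, …, n−1, each with multiplicity 2, together with 1 with multiplicity 2(k−1)n. -/

import Mathlib

open Polynomial

/-- Vertex set of `W n k`: `Sum.inl (i, j)` is the vertex `v_{i,j}` and
`Sum.inr (i, j)` is the vertex `w_{i,j}`, for `i ∈ ℤ/nℤ` and `j ∈ {1, …, k}`. -/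
abbrev WVert (n k : ℕ) : Type := (ZMod n × Fin k) ⊕ (ZMod n × Fin k)

/-- Adjacency of `W n k`: `v_{i,j} ~ w_{i',l}` iff `i' = i`, or `i = i' + 1` and `j = l`. -/
def WAdj (n k : ℕ) : WVert n k → WVert n k → Prop
  | Sum.inl p, Sum.inr q => q.1 = p.1 ∨ (p.1 = q.1 + 1 ∧ p.2 = q.2)
  | Sum.inr q, Sum.inl p => q.1 = p.1 ∨ (p.1 = q.1 + 1 ∧ p.2 = q.2)
  | Sum.inl _, Sum.inl _ => False
  | Sum.inr _, Sum.inr _ => False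

/-- The graph `W_{n,k}`: vertices `v_{i,j}` and `w_{i,j}` (`i ∈ ℤ/nℤ`, `1 ≤ j ≤ k`),
with edges `v_{i,j} w_{i,l}` for all `i, j, l`, and `w_{i,j} v_{i+1,j}` for all `i, j`. -/
def W (n k : ℕ) : SimpleGraph (WVert n k) where
  Adj := WAdj n k
  symm := by
    refine ⟨?_⟩
    rintro (p | p) (q | q) h
    · exact h.elim
    · exact h
    · exact h
    · exact h.elim
  loopless := by refine ⟨?_⟩; rintro (p | p) h <;> exact h

instance (n k : ℕ) : DecidableRel (WAdj n k) := fun a b =>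
  match a, b with
  | Sum.inl p, Sum.inr q =>
      inferInstanceAs (Decidable (q.1 = p.1 ∨ (p.1 = q.1 + 1 ∧ p.2 = q.2)))
  | Sum.inr q, Sum.inl p =>
      inferInstanceAs (Decidable (q.1 = p.1 ∨ (p.1 = q.1 + 1 ∧ p.2 = q.2)))
  | Sum.inl _, Sum.inl _ => inferInstanceAs (Decidable False)
  | Sum.inr _, Sum.inr _ => inferInstanceAs (Decidable False)

instance (n k : ℕ) : DecidableRel (W n k).Adj :=
  inferInstanceAs (DecidableRel (WAdj n k))

noncomputable section
namespace WPf
open Complex Matrix Finset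

variable (n k : ℕ)

def ww : ℂ := Complex.exp (2 * ↑Real.pi * Complex.I / n)

lemma ww_prim [NeZero n] : IsPrimitiveRoot (ww n) n :=
  Complex.isPrimitiveRoot_exp n (NeZero.ne n)

lemma ww_pow_n [NeZero n] : ww n ^ n = 1 := (ww_prim n).pow_eq_one

lemma pow_mod (ζ : ℂ) {N : ℕ} (h : ζ ^ N = 1) (s : ℕ) : ζ ^ (s % N) = ζ ^ s := by
  conv_rhs => rw [← Nat.mod_add_div s N]
  rw [pow_add, pow_mul, h, one_pow, mul_one]

def φ (z : ZMod n) : ℂ := ww n ^ z.val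

lemma φ_add [NeZero n] (x y : ZMod n) : φ n (x + y) = φ n x * φ n y := by
  rw [φ, φ, φ, ZMod.val_add, pow_mod _ (ww_pow_n n), pow_add]

lemma φ_zero [NeZero n] : φ n 0 = 1 := by simp [φ]

lemma φ_neg_mul [NeZero n] (x : ZMod n) : φ n x * φ n (-x) = 1 := by
  rw [← φ_add, add_neg_cancel, φ_zero]

lemma φ_mul_val [NeZero n] (a c : ZMod n) : φ n (a * c) = (ww n ^ c.val) ^ a.val := by
  rw [φ, ZMod.val_mul, pow_mod _ (ww_pow_n n), ← pow_mul, mul_comm]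

lemma geom (ζ : ℂ) {N : ℕ} (hN : ζ ^ N = 1) (hζ : ζ ≠ 1) : ∑ t ∈ Finset.range N, ζ ^ t = 0 := by
  rw [geom_sum_eq hζ, hN, sub_self, zero_div]

lemma sum_zmod [NeZero n] (f : ℕ → ℂ) : ∑ a : ZMod n, f a.val = ∑ t ∈ Finset.range n, f t := by
  refine Finset.sum_nbij' (fun a => a.val) (fun t => (t : ZMod n)) ?_ ?_ ?_ ?_ ?_
  · exact fun a _ => Finset.mem_range.mpr (ZMod.val_lt a)
  · exact fun t _ => Finset.mem_univ _
  · exact fun a _ => ZMod.natCast_zmod_val a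
  · exact fun t ht => ZMod.val_cast_of_lt (Finset.mem_range.mp ht)
  · exact fun a _ => rfl

lemma zmod_char [NeZero n] (c : ZMod n) :
    ∑ a : ZMod n, φ n (a * c) = if c = 0 then (n : ℂ) else 0 := by
  simp_rw [φ_mul_val n]
  rw [sum_zmod n (fun t => (ww n ^ c.val) ^ t)]
  by_cases hc : c = 0
  · subst hc
    simp [ZMod.val_zero]
  · rw [if_neg hc]
    refine geom _ ?_ ?_
    · rw [← pow_mul, mul_comm, pow_mul, ww_pow_n, one_pow]
    · intro h
      have := (ww_prim n).pow_ne_one_of_pos_of_lt ?_ (ZMod.val_lt c)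
      · exact this h
      · simpa [ZMod.val_eq_zero] using hc

lemma fin_char (hk : k ≠ 0) (s : ℕ) :
    ∑ m : Fin k, ww k ^ (m.val * s) = if k ∣ s then (k : ℂ) else 0 := by
  haveI : NeZero k := ⟨hk⟩
  have h : ∀ m : Fin k, ww k ^ (m.val * s) = (ww k ^ s) ^ m.val := fun m => by
    rw [← pow_mul, mul_comm]
  simp_rw [h]
  rw [Fin.sum_univ_eq_sum_range (fun t => (ww k ^ s) ^ t)]
  by_cases hd : k ∣ s
  · rw [if_pos hd]
    obtain ⟨t, rfl⟩ := hd
    simp [pow_mul, ww_pow_n k]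
  · rw [if_neg hd]
    refine geom _ ?_ ?_
    · rw [← pow_mul, mul_comm, pow_mul, ww_pow_n, one_pow]
    · intro h1
      exact hd (((ww_prim k).pow_eq_one_iff_dvd s).mp h1)

def g (m j : Fin k) : ℂ := ww k ^ (j.val * m.val)

def sg (m : Fin k) : ℂ := ∑ l : Fin k, g k m l

lemma sg_eq (hk : k ≠ 0) (m : Fin k) : sg k m = if m.val = 0 then (k : ℂ) else 0 := by
  rw [sg]
  have : ∀ l : Fin k, g k m l = ww k ^ (l.val * m.val) := fun l => rfl
  simp_rw [this]
  rw [fin_char k hk m.val]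
  by_cases hm : m.val = 0
  · rw [if_pos hm, if_pos (hm ▸ dvd_zero k)]
  · rw [if_neg hm, if_neg]
    intro hd
    exact hm (Nat.eq_zero_of_dvd_of_lt hd m.isLt)

lemma sum_split_v [NeZero n] (hn : 2 ≤ n) (i : ZMod n) (j : Fin k) (f : ZMod n → Fin k → ℂ) :
    ∑ q : ZMod n × Fin k, (if q.1 = i ∨ (i = q.1 + 1 ∧ j = q.2) then (1:ℂ) else 0) * f q.1 q.2
      = (∑ l, f i l) + f (i - 1) j := by
  haveI : Fact (1 < n) := ⟨by omega⟩
  have hone : (1 : ZMod n) ≠ 0 := one_ne_zero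
  have hsub : ∀ x : ZMod n, x = i - 1 ↔ i = x + 1 := fun x => by
    rw [eq_sub_iff_add_eq, eq_comm]
  have key : ∀ q : ZMod n × Fin k,
      (if q.1 = i ∨ (i = q.1 + 1 ∧ j = q.2) then (1:ℂ) else 0) * f q.1 q.2
      = (if q.1 = i then f q.1 q.2 else 0) + (if q = (i - 1, j) then f q.1 q.2 else 0) := by
    rintro ⟨x, y⟩
    simp only [Prod.mk.injEq]
    by_cases h2 : i = x + 1 <;> by_cases h1 : x = i
    · exfalso; rw [h1] at h2; exact hone (left_eq_add.mp h2)
    · by_cases h3 : j = y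
      · rw [if_pos (Or.inr ⟨h2, h3⟩), if_neg h1, if_pos ⟨(hsub x).mpr h2, h3.symm⟩,
          one_mul, zero_add]
      · rw [if_neg (by rintro (h | ⟨-, h⟩); exacts [h1 h, h3 h]), if_neg h1,
          if_neg (by rintro ⟨-, h⟩; exact h3 h.symm), zero_mul, add_zero]
    · rw [if_pos (Or.inl h1), if_pos h1,
        if_neg (by rintro ⟨hx, -⟩; exact h2 ((hsub x).mp hx)), one_mul, add_zero]
    · rw [if_neg (by rintro (h | ⟨h, -⟩); exacts [h1 h, h2 h]), if_neg h1,
        if_neg (by rintro ⟨hx, -⟩; exact h2 ((hsub x).mp hx)), zero_mul, add_zero]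
  rw [Finset.sum_congr rfl (fun q _ => key q), Finset.sum_add_distrib]
  congr 1
  · rw [Fintype.sum_prod_type]
    have : ∀ x : ZMod n, (∑ y : Fin k, if x = i then f x y else 0)
        = if x = i then (∑ y : Fin k, f x y) else 0 := fun x => by split <;> simp
    simp_rw [this]
    rw [Finset.sum_ite_eq' Finset.univ i (fun x => ∑ y : Fin k, f x y),
      if_pos (Finset.mem_univ i)]
  · rw [Finset.sum_ite_eq' Finset.univ ((i - 1, j) : ZMod n × Fin k) (fun q => f q.1 q.2),
      if_pos (Finset.mem_univ _)]

lemma sum_split_w [NeZero n] (hn : 2 ≤ n) (i : ZMod n) (j : Fin k) (f : ZMod n → Fin k → ℂ) :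
    ∑ q : ZMod n × Fin k, (if i = q.1 ∨ (q.1 = i + 1 ∧ q.2 = j) then (1:ℂ) else 0) * f q.1 q.2
      = (∑ l, f i l) + f (i + 1) j := by
  haveI : Fact (1 < n) := ⟨by omega⟩
  have hone : (1 : ZMod n) ≠ 0 := one_ne_zero
  have key : ∀ q : ZMod n × Fin k,
      (if i = q.1 ∨ (q.1 = i + 1 ∧ q.2 = j) then (1:ℂ) else 0) * f q.1 q.2
      = (if q.1 = i then f q.1 q.2 else 0) + (if q = (i + 1, j) then f q.1 q.2 else 0) := by
    rintro ⟨x, y⟩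
    simp only [Prod.mk.injEq]
    by_cases h2 : x = i + 1 <;> by_cases h1 : x = i
    · exfalso; rw [h1] at h2; exact hone (left_eq_add.mp h2)
    · by_cases h3 : y = j
      · rw [if_pos (Or.inr ⟨h2, h3⟩), if_neg h1, if_pos ⟨h2, h3⟩, one_mul, zero_add]
      · rw [if_neg (by rintro (h | ⟨-, h⟩); exacts [h1 h.symm, h3 h]), if_neg h1,
          if_neg (by rintro ⟨-, h⟩; exact h3 h), zero_mul, add_zero]
    · rw [if_pos (Or.inl h1.symm), if_pos h1,
        if_neg (by rintro ⟨hx, -⟩; exact h2 hx), one_mul, add_zero]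
    · rw [if_neg (by rintro (h | ⟨h, -⟩); exacts [h1 h.symm, h2 h]), if_neg h1,
        if_neg (by rintro ⟨hx, -⟩; exact h2 hx), zero_mul, add_zero]
  rw [Finset.sum_congr rfl (fun q _ => key q), Finset.sum_add_distrib]
  congr 1
  · rw [Fintype.sum_prod_type]
    have : ∀ x : ZMod n, (∑ y : Fin k, if x = i then f x y else 0)
        = if x = i then (∑ y : Fin k, f x y) else 0 := fun x => by split <;> simp
    simp_rw [this]
    rw [Finset.sum_ite_eq' Finset.univ i (fun x => ∑ y : Fin k, f x y),
      if_pos (Finset.mem_univ i)]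
  · rw [Finset.sum_ite_eq' Finset.univ ((i + 1, j) : ZMod n × Fin k) (fun q => f q.1 q.2),
      if_pos (Finset.mem_univ _)]

def Mv : Matrix (ZMod n × Fin k) (ZMod n × Fin k) ℂ :=
  fun p q => if q.1 = p.1 ∨ (p.1 = q.1 + 1 ∧ p.2 = q.2) then 1 else 0

def Mw : Matrix (ZMod n × Fin k) (ZMod n × Fin k) ℂ :=
  fun q p => if q.1 = p.1 ∨ (p.1 = q.1 + 1 ∧ p.2 = q.2) then 1 else 0

def P : Matrix (ZMod n × Fin k) (ZMod n × Fin k) ℂ :=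
  fun r c => φ n (c.1 * r.1) * g k c.2 r.2

def Pp : Matrix (ZMod n × Fin k) (ZMod n × Fin k) ℂ :=
  fun r c => φ n (c.1 * r.1) * sg k c.2 + φ n (c.1 * (r.1 + 1)) * g k c.2 r.2

def Pm : Matrix (ZMod n × Fin k) (ZMod n × Fin k) ℂ :=
  fun r c => φ n (c.1 * r.1) * sg k c.2 + φ n (c.1 * (r.1 - 1)) * g k c.2 r.2

def lam (a : ZMod n) : ℂ := (k:ℂ)^2 + 1 + k * (φ n a + φ n (-a))

def dg : ZMod n × Fin k → ℂ := fun c => if c.2.val = 0 then lam n k c.1 else 1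

def Pinv : Matrix (ZMod n × Fin k) (ZMod n × Fin k) ℂ :=
  fun c r => ((n:ℂ) * k)⁻¹ * (φ n (c.1 * (-r.1)) * ww k ^ (c.2.val * (k - r.2.val)))

lemma MvP [NeZero n] (hn : 2 ≤ n) : Mv n k * P n k = Pm n k := by
  ext ⟨i, j⟩ ⟨a, m⟩
  rw [Matrix.mul_apply]
  show ∑ q : ZMod n × Fin k, (if q.1 = i ∨ (i = q.1 + 1 ∧ j = q.2) then (1:ℂ) else 0) *
      (φ n (a * q.1) * g k m q.2) = _
  rw [sum_split_v n k hn i j (fun x y => φ n (a * x) * g k m y)]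
  show _ = φ n (a * i) * sg k m + φ n (a * (i - 1)) * g k m j
  rw [sg, Finset.mul_sum]

lemma MwP [NeZero n] (hn : 2 ≤ n) : Mw n k * P n k = Pp n k := by
  ext ⟨i, j⟩ ⟨a, m⟩
  rw [Matrix.mul_apply]
  show ∑ q : ZMod n × Fin k, (if i = q.1 ∨ (q.1 = i + 1 ∧ q.2 = j) then (1:ℂ) else 0) *
      (φ n (a * q.1) * g k m q.2) = _
  rw [sum_split_w n k hn i j (fun x y => φ n (a * x) * g k m y)]
  show _ = φ n (a * i) * sg k m + φ n (a * (i + 1)) * g k m j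
  rw [sg, Finset.mul_sum]

lemma MvPp [NeZero n] (hn : 2 ≤ n) (hk : 2 ≤ k) :
    Mv n k * Pp n k = P n k * Matrix.diagonal (dg n k) := by
  ext ⟨i, j⟩ ⟨a, m⟩
  rw [Matrix.mul_apply, Matrix.mul_diagonal]
  show ∑ q : ZMod n × Fin k, (if q.1 = i ∨ (i = q.1 + 1 ∧ j = q.2) then (1:ℂ) else 0) *
      (φ n (a * q.1) * sg k m + φ n (a * (q.1 + 1)) * g k m q.2)
      = φ n (a * i) * g k m j * dg n k (a, m)
  rw [sum_split_v n k hn i j (fun x y => φ n (a * x) * sg k m + φ n (a * (x + 1)) * g k m y)]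
  rw [Finset.sum_add_distrib, Finset.sum_const, ← Finset.mul_sum]
  have hsg' : ∑ l : Fin k, g k m l = sg k m := rfl
  rw [hsg', Finset.card_univ, Fintype.card_fin, nsmul_eq_mul]
  have e1 : a * (i + 1) = a * i + a := by ring
  have e2 : a * (i - 1) = a * i + -a := by ring
  have e3 : a * (i - 1 + 1) = a * i := by ring
  rw [e1, e2, e3, φ_add, φ_add]
  by_cases hm : m.val = 0
  · have h1 : sg k m = (k : ℂ) := by rw [sg_eq k (by omega) m, if_pos hm]
    have h2 : g k m j = 1 := by rw [g, hm, Nat.mul_zero, pow_zero]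
    have h3 : dg n k (a, m) = lam n k a := if_pos hm
    rw [h1, h2, h3, lam]
    ring
  · have h1 : sg k m = 0 := by rw [sg_eq k (by omega) m, if_neg hm]
    have h3 : dg n k (a, m) = 1 := if_neg hm
    rw [h1, h3]
    ring

lemma MwPm [NeZero n] (hn : 2 ≤ n) (hk : 2 ≤ k) :
    Mw n k * Pm n k = P n k * Matrix.diagonal (dg n k) := by
  ext ⟨i, j⟩ ⟨a, m⟩
  rw [Matrix.mul_apply, Matrix.mul_diagonal]
  show ∑ q : ZMod n × Fin k, (if i = q.1 ∨ (q.1 = i + 1 ∧ q.2 = j) then (1:ℂ) else 0) *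
      (φ n (a * q.1) * sg k m + φ n (a * (q.1 - 1)) * g k m q.2)
      = φ n (a * i) * g k m j * dg n k (a, m)
  rw [sum_split_w n k hn i j (fun x y => φ n (a * x) * sg k m + φ n (a * (x - 1)) * g k m y)]
  rw [Finset.sum_add_distrib, Finset.sum_const, ← Finset.mul_sum]
  have hsg' : ∑ l : Fin k, g k m l = sg k m := rfl
  rw [hsg', Finset.card_univ, Fintype.card_fin, nsmul_eq_mul]
  have e1 : a * (i + 1) = a * i + a := by ring
  have e2 : a * (i - 1) = a * i + -a := by ring
  have e3 : a * (i + 1 - 1) = a * i := by ring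
  rw [e1, e2, e3, φ_add, φ_add]
  by_cases hm : m.val = 0
  · have h1 : sg k m = (k : ℂ) := by rw [sg_eq k (by omega) m, if_pos hm]
    have h2 : g k m j = 1 := by rw [g, hm, Nat.mul_zero, pow_zero]
    have h3 : dg n k (a, m) = lam n k a := if_pos hm
    rw [h1, h2, h3, lam]
    ring
  · have h1 : sg k m = 0 := by rw [sg_eq k (by omega) m, if_neg hm]
    have h3 : dg n k (a, m) = 1 := if_neg hm
    rw [h1, h3]
    ring

lemma PPinv [NeZero n] (hn : 2 ≤ n) (hk : 2 ≤ k) : P n k * Pinv n k = 1 := by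
  have hkne : k ≠ 0 := by omega
  ext ⟨i, j⟩ ⟨i', j'⟩
  rw [Matrix.mul_apply]
  have key : ∀ c : ZMod n × Fin k, P n k (i, j) c * Pinv n k c (i', j')
      = ((n:ℂ) * k)⁻¹ * (φ n (c.1 * (i - i')) * ww k ^ (c.2.val * (j.val + (k - j'.val)))) := by
    rintro ⟨a, m⟩
    show φ n (a * i) * g k m j * (((n:ℂ) * k)⁻¹ * (φ n (a * -i') * ww k ^ (m.val * (k - j'.val))))
      = _
    have h1 : φ n (a * i) * φ n (a * -i') = φ n (a * (i - i')) := by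
      rw [← φ_add]; congr 1; ring
    have h2 : g k m j * ww k ^ (m.val * (k - j'.val))
        = ww k ^ (m.val * (j.val + (k - j'.val))) := by
      rw [g, ← pow_add]; congr 1; ring
    calc φ n (a * i) * g k m j * (((n:ℂ) * k)⁻¹ * (φ n (a * -i') * ww k ^ (m.val * (k - j'.val))))
        = ((n:ℂ) * k)⁻¹ * ((φ n (a * i) * φ n (a * -i')) *
            (g k m j * ww k ^ (m.val * (k - j'.val)))) := by ring
      _ = _ := by rw [h1, h2]
  rw [Finset.sum_congr rfl (fun c _ => key c), ← Finset.mul_sum, Fintype.sum_prod_type]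
  have inner : ∀ a : ZMod n, ∑ m : Fin k,
      φ n (a * (i - i')) * ww k ^ (m.val * (j.val + (k - j'.val)))
      = φ n (a * (i - i')) * ∑ m : Fin k, ww k ^ (m.val * (j.val + (k - j'.val))) := fun a => by
    rw [Finset.mul_sum]
  rw [Finset.sum_congr rfl (fun a _ => inner a), ← Finset.sum_mul, zmod_char n (i - i'),
    fin_char k hkne]
  rw [Matrix.one_apply]
  by_cases hii : i = i'
  · rw [if_pos (sub_eq_zero_of_eq hii)]
    by_cases hjj : j = j'
    · have hd : k ∣ j.val + (k - j'.val) := by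
        have := j'.isLt; subst hjj
        have : j.val + (k - j.val) = k := by omega
        rw [this]
      rw [if_pos hd, if_pos (by rw [hii, hjj])]
      have hn0 : (n:ℂ) ≠ 0 := Nat.cast_ne_zero.mpr (by omega)
      have hk0 : (k:ℂ) ≠ 0 := Nat.cast_ne_zero.mpr hkne
      field_simp
    · have hd : ¬ k ∣ j.val + (k - j'.val) := by
        intro hd
        have h1 := j.isLt
        have h2 := j'.isLt
        have h3 : 0 < j.val + (k - j'.val) := by omega
        have h4 : j.val + (k - j'.val) < 2 * k := by omega
        obtain ⟨t, ht⟩ := hd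
        have h5 : j.val + (k - j'.val) = k := by
          rcases t with - | - | t
          · rw [Nat.mul_zero] at ht; omega
          · rw [Nat.mul_one] at ht; omega
          · have he : k * (t + 1 + 1) = k * t + k + k := by ring
            rw [he] at ht
            omega
        exact hjj (Fin.ext (by omega))
      rw [if_neg hd, if_neg (by simp [hjj] : ¬ ((i, j) = (i', j'))), mul_zero, mul_zero]
  · rw [if_neg (sub_ne_zero_of_ne hii), if_neg (by simp [hii] : ¬ ((i, j) = (i', j'))),
      zero_mul, mul_zero]

lemma charpoly_similar {m : Type*} [Fintype m] [DecidableEq m]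
    (B U V D : Matrix m m ℂ) (hUV : U * V = 1) (h : B * U = U * D) :
    B.charpoly = D.charpoly := by
  classical
  have hB : B = U * D * V := by
    calc B = B * (U * V) := by rw [hUV, mul_one]
    _ = B * U * V := by rw [mul_assoc]
    _ = U * D * V := by rw [h]
  set f := (Polynomial.C : ℂ →+* ℂ[X]) with hf
  have hone : U.map f * V.map f = 1 := by
    rw [← Matrix.map_mul, hUV]
    exact Matrix.map_one f (map_zero f) (map_one f)
  have key : Matrix.charmatrix B = U.map f * Matrix.charmatrix D * V.map f := by
    rw [Matrix.charmatrix, Matrix.charmatrix, RingHom.mapMatrix_apply, RingHom.mapMatrix_apply,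
      hB, Matrix.map_mul, Matrix.map_mul]
    rw [Matrix.mul_sub, Matrix.sub_mul]
    congr 1
    have hcomm : U.map f * Matrix.scalar m (X : ℂ[X]) = Matrix.scalar m (X : ℂ[X]) * U.map f :=
      ((Matrix.scalar_commute (X : ℂ[X]) (fun r' => Commute.all _ r') (U.map f))).symm
    calc Matrix.scalar m (X : ℂ[X])
        = Matrix.scalar m (X : ℂ[X]) * (U.map f * V.map f) := by rw [hone, mul_one]
      _ = Matrix.scalar m (X : ℂ[X]) * U.map f * V.map f := by rw [mul_assoc]
      _ = U.map f * Matrix.scalar m (X : ℂ[X]) * V.map f := by rw [hcomm]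
  rw [Matrix.charpoly, Matrix.charpoly, key, Matrix.det_mul, Matrix.det_mul]
  have : (U.map f).det * (V.map f).det = 1 := by
    rw [← Matrix.det_mul, hone, Matrix.det_one]
  calc (U.map f).det * (Matrix.charmatrix D).det * (V.map f).det
      = (Matrix.charmatrix D).det * ((U.map f).det * (V.map f).det) := by ring
    _ = (Matrix.charmatrix D).det := by rw [this, mul_one]

lemma charpoly_diag {m : Type*} [Fintype m] [DecidableEq m] (dd : m → ℂ) :
    (Matrix.diagonal dd).charpoly = ∏ x, ((X : ℂ[X]) - C (dd x)) := by
  have h : Matrix.charmatrix (Matrix.diagonal dd)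
      = Matrix.diagonal (fun x => (X : ℂ[X]) - C (dd x)) := by
    ext i j
    by_cases hij : i = j
    · subst hij
      rw [Matrix.charmatrix_apply_eq, Matrix.diagonal_apply_eq, Matrix.diagonal_apply_eq]
    · rw [Matrix.charmatrix_apply_ne _ _ _ hij, Matrix.diagonal_apply_ne _ hij,
        Matrix.diagonal_apply_ne _ hij, map_zero, neg_zero]
  rw [Matrix.charpoly, h, Matrix.det_diagonal]

lemma lam_cast [NeZero n] (hn : 2 ≤ n) (j : ℕ) (hj : j < n) :
    lam n k ((j : ZMod n)) = (k:ℂ)^2 + 1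
      + 2 * (k:ℂ) * Complex.cos (((2 * Real.pi * j / n : ℝ) : ℂ)) := by
  have hval : ((j : ZMod n)).val = j := ZMod.val_cast_of_lt hj
  have h1 : φ n ((j : ZMod n)) = Complex.exp (((2 * Real.pi * j / n : ℝ) : ℂ) * Complex.I) := by
    rw [φ, hval, ww, ← Complex.exp_nat_mul]
    congr 1
    push_cast
    have hn0 : (n:ℂ) ≠ 0 := Nat.cast_ne_zero.mpr (by omega)
    field_simp
  have h2 : φ n (-(j : ZMod n))
      = Complex.exp (-((((2 * Real.pi * j / n : ℝ) : ℂ)) * Complex.I)) := by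
    rw [Complex.exp_neg, ← h1]
    exact (inv_eq_of_mul_eq_one_right (φ_neg_mul n _)).symm
  rw [lam, h1, h2, ← neg_mul, ← Complex.two_cos]
  ring

end WPf
end

/-- If `A` is the adjacency matrix of `W_{n,k}`, then the characteristic polynomial of
`A²` equals `(X − 1)^{2(k−1)n} · ∏_{j=0}^{n−1} (X − (k² + 1 + 2k cos(2πj/n)))²`; i.e.
the eigenvalues of `A²` are `k² + 1 + 2k cos(2πj/n)` for `j = 0,…,n−1`, each with
multiplicity `2`, together with `1` with multiplicity `2(k−1)n`. -/
theorem W_adjMatrix_sq_charpoly (n k : ℕ) [NeZero n] (hn : 2 ≤ n) (hk : 2 ≤ k) :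
    (((W n k).adjMatrix ℝ) ^ 2).charpoly =
      (X - 1) ^ (2 * ((k - 1) * n)) *
        ∏ j ∈ Finset.range n,
          (X - C ((k : ℝ) ^ 2 + 1 + 2 * k * Real.cos (2 * Real.pi * j / n))) ^ 2 := by
  classical
  have hkne : k ≠ 0 := by omega
  apply Polynomial.map_injective Complex.ofRealHom Complex.ofReal_injective
  rw [← Matrix.charpoly_map]
  have hadj : ((W n k).adjMatrix ℝ).map Complex.ofRealHom = (W n k).adjMatrix ℂ := by
    ext v w
    simp [Matrix.map_apply, SimpleGraph.adjMatrix_apply, apply_ite (⇑Complex.ofRealHom)]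
  have hmap : (((W n k).adjMatrix ℝ) ^ 2).map Complex.ofRealHom = ((W n k).adjMatrix ℂ) ^ 2 := by
    rw [sq, sq, Matrix.map_mul, hadj]
  rw [hmap]
  have hA : (W n k).adjMatrix ℂ = Matrix.fromBlocks 0 (WPf.Mv n k) (WPf.Mw n k) 0 := by
    ext v w
    rcases v with p | p <;> rcases w with q | q
    · simp only [SimpleGraph.adjMatrix_apply, Matrix.fromBlocks_apply₁₁, Matrix.zero_apply]
      exact if_neg (fun h => h)
    · simp only [SimpleGraph.adjMatrix_apply, Matrix.fromBlocks_apply₁₂]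
      by_cases h : (W n k).Adj (Sum.inl p) (Sum.inr q)
      · rw [if_pos h]; exact (if_pos h).symm
      · rw [if_neg h]; exact (if_neg h).symm
    · simp only [SimpleGraph.adjMatrix_apply, Matrix.fromBlocks_apply₂₁]
      by_cases h : (W n k).Adj (Sum.inr p) (Sum.inl q)
      · rw [if_pos h]; exact (if_pos h).symm
      · rw [if_neg h]; exact (if_neg h).symm
    · simp only [SimpleGraph.adjMatrix_apply, Matrix.fromBlocks_apply₂₂, Matrix.zero_apply]
      exact if_neg (fun h => h)
  have hsq : ((W n k).adjMatrix ℂ) ^ 2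
      = Matrix.fromBlocks (WPf.Mv n k * WPf.Mw n k) 0 0 (WPf.Mw n k * WPf.Mv n k) := by
    rw [sq, hA, Matrix.fromBlocks_multiply]
    simp
  have hUV : Matrix.fromBlocks (WPf.P n k) 0 0 (WPf.P n k) *
      Matrix.fromBlocks (WPf.Pinv n k) 0 0 (WPf.Pinv n k) = 1 := by
    rw [Matrix.fromBlocks_multiply]
    simp [WPf.PPinv n k hn hk, Matrix.fromBlocks_one]
  have hcomm : ((W n k).adjMatrix ℂ) ^ 2 * Matrix.fromBlocks (WPf.P n k) 0 0 (WPf.P n k)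
      = Matrix.fromBlocks (WPf.P n k) 0 0 (WPf.P n k)
        * Matrix.diagonal (Sum.elim (WPf.dg n k) (WPf.dg n k)) := by
    rw [hsq, ← Matrix.fromBlocks_diagonal, Matrix.fromBlocks_multiply,
      Matrix.fromBlocks_multiply]
    have e1 : WPf.Mv n k * WPf.Mw n k * WPf.P n k
        = WPf.P n k * Matrix.diagonal (WPf.dg n k) := by
      rw [Matrix.mul_assoc, WPf.MwP n k hn, WPf.MvPp n k hn hk]
    have e2 : WPf.Mw n k * WPf.Mv n k * WPf.P n k
        = WPf.P n k * Matrix.diagonal (WPf.dg n k) := by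
      rw [Matrix.mul_assoc, WPf.MvP n k hn, WPf.MwPm n k hn hk]
    simp [e1, e2]
  rw [WPf.charpoly_similar _ _ _ _ hUV hcomm, WPf.charpoly_diag]
  rw [Fintype.prod_sum_type]
  simp only [Sum.elim_inl, Sum.elim_inr]
  rw [← sq]
  have hQ : (∏ c : ZMod n × Fin k, ((X : ℂ[X]) - C (WPf.dg n k c)))
      = (X - 1) ^ ((k - 1) * n) * ∏ a : ZMod n, (X - C (WPf.lam n k a)) := by
    rw [Fintype.prod_prod_type]
    have inner : ∀ a : ZMod n, (∏ m : Fin k, ((X : ℂ[X]) - C (WPf.dg n k (a, m))))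
        = (X - C (WPf.lam n k a)) * (X - 1) ^ (k - 1) := by
      intro a
      haveI : NeZero k := ⟨hkne⟩
      have hterm : ∀ m : Fin k, ((X : ℂ[X]) - C (WPf.dg n k (a, m)))
          = if m.val = 0 then (X - C (WPf.lam n k a)) else (X - 1) := by
        intro m
        by_cases hm : m.val = 0
        · rw [if_pos hm]
          congr 1
          exact congrArg C (if_pos hm)
        · rw [if_neg hm]
          have hd1 : WPf.dg n k (a, m) = 1 := if_neg hm
          rw [hd1, map_one]
      rw [Finset.prod_congr rfl (fun m _ => hterm m), Finset.prod_ite, Finset.prod_const,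
        Finset.prod_const]
      have hfil : Finset.filter (fun m : Fin k => m.val = 0) Finset.univ = {(0 : Fin k)} := by
        ext m
        simp only [Finset.mem_filter, Finset.mem_univ, true_and, Finset.mem_singleton]
        constructor
        · intro h; exact Fin.ext (by simp [h])
        · intro h; subst h; simp
      have hcard1 : (Finset.filter (fun m : Fin k => m.val = 0) Finset.univ).card = 1 := by
        rw [hfil, Finset.card_singleton]
      have hcard2 : (Finset.filter (fun m : Fin k => ¬ m.val = 0) Finset.univ).card = k - 1 := by
        have htot := Finset.card_filter_add_card_filter_not
          (s := (Finset.univ : Finset (Fin k))) (p := fun m : Fin k => m.val = 0)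
        rw [Finset.card_univ, Fintype.card_fin] at htot
        omega
      rw [hcard1, hcard2, pow_one]
    rw [Finset.prod_congr rfl (fun a _ => inner a), Finset.prod_mul_distrib, Finset.prod_const,
      Finset.card_univ, ZMod.card, ← pow_mul]
    ring
  rw [hQ]
  have hre : (∏ a : ZMod n, ((X : ℂ[X]) - C (WPf.lam n k a)))
      = ∏ j ∈ Finset.range n, (X - C ((k:ℂ)^2 + 1 +
          2 * (k:ℂ) * Complex.cos (((2 * Real.pi * j / n : ℝ) : ℂ)))) := by
    refine Finset.prod_nbij' (fun a => a.val) (fun t => (t : ZMod n)) ?_ ?_ ?_ ?_ ?_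
    · exact fun a _ => Finset.mem_range.mpr (ZMod.val_lt a)
    · exact fun t _ => Finset.mem_univ _
    · exact fun a _ => ZMod.natCast_zmod_val a
    · exact fun t ht => ZMod.val_cast_of_lt (Finset.mem_range.mp ht)
    · intro a _
      congr 1
      rw [← WPf.lam_cast n k hn a.val (ZMod.val_lt a), ZMod.natCast_zmod_val]
  rw [hre]
  rw [Polynomial.map_mul, Polynomial.map_pow, Polynomial.map_sub, Polynomial.map_X,
    Polynomial.map_one, Polynomial.map_prod]
  simp only [Polynomial.map_pow, Polynomial.map_sub, Polynomial.map_X, Polynomial.map_C]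
  rw [mul_pow, ← pow_mul, ← Finset.prod_pow]
  refine congrArg₂ (· * ·) ?_ ?_
  · rw [mul_comm ((k - 1) * n) 2]
  · refine Finset.prod_congr rfl (fun j hj => ?_)
    congr 3
    simp only [Complex.ofRealHom_eq_coe]
    push_cast [Complex.ofReal_cos]
    ring
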